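/- For each j ∈ K, let (A_j, p_{A_j}) be an ensemble of functions U_j^n → Im A_j satisfying the strong (α_j, β_j)-hash condition, with the A_j and uniformly distributed a_j ∈ Im A_j all mutually independent. For J ⊆ K define α_J ≡ Π_{j∈J} α_j and β_J ≡ Π_{j∈J}(β_j+1) − 1. Then for every nonempty T ⊆ Π_{j∈K} U_j^n: P({(A_K, a_K) : T ∩ C_{A_K}(a_K) = ∅}) ≤ α_K − 1 + Σ over proper subsets J ⊊ K of |Im A_{J^c}|·|T_{J|J^c}|·α_J·(β_{J^c}+1)/|T|, where |Im A_{J^c}| = Π_{j∈J^c}|Im A_j| and |T_{J|J^c}| is defined as 1 if J = ∅, |T| if J = K, and max over u_{J^c} in the projection of T of the fiber size otherwise. -/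

import Mathlib

open Finset
open scoped Classical

/-- Collision probability `p_A({A : Au = Au'})` for an ensemble of functions. -/
noncomputable def collP {𝒜 X B : Type*} [Fintype 𝒜] (p : 𝒜 → ℝ)
    (F : 𝒜 → X → B) (u u' : X) : ℝ :=
  ∑ a : 𝒜, if F a u = F a u' then p a else 0

/-- The strong (α,β)-hash condition for an ensemble of functions `X → B`. -/
noncomputable def StrongHash {𝒜 X B : Type*} [Fintype 𝒜] [Fintype X] [Fintype B]
    (p : 𝒜 → ℝ) (F : 𝒜 → X → B) (α β : ℝ) : Prop :=
  ∀ u : X,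
    ∑ u' ∈ (Finset.univ.erase u).filter
        (fun u' => α / (Fintype.card B : ℝ) < collP p F u u'),
      collP p F u u' ≤ β

/-- `|T_{J|J^c}|`: 1 if `J = ∅`, `|T|` if `J = K`, and otherwise the maximum fiber size. -/
noncomputable def fiberMax {K : Type*} [Fintype K] {X : K → Type*}
    (T : Finset (∀ j, X j)) (J : Finset K) : ℕ :=
  if J = ∅ then 1
  else if J = Finset.univ then T.card
  else T.sup fun w => (T.filter fun w' => ∀ j ∉ J, w' j = w j).card

lemma cylinder_sum {K : Type*} [Fintype K] {X : K → Type*} [∀ j, Fintype (X j)]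
    (s : Finset K) (w : ∀ j, X j) (g : ∀ j, X j → ℝ) :
    ∑ v ∈ Finset.univ.filter (fun v : ∀ j, X j => ∀ j ∉ s, v j = w j),
      ∏ j ∈ s, g j (v j) = ∏ j ∈ s, ∑ x, g j x := by
  classical
  rw [Finset.sum_filter]
  calc ∑ v : ∀ j, X j, (if (∀ j ∉ s, v j = w j) then ∏ j ∈ s, g j (v j) else 0)
      = ∑ v : ∀ j, X j, ∏ j, (if j ∈ s then g j (v j) else if v j = w j then 1 else 0) := by
        refine Finset.sum_congr rfl fun v _ => ?_
        rw [← Finset.prod_mul_prod_compl s]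
        have h1 : ∏ j ∈ s, (if j ∈ s then g j (v j) else if v j = w j then (1:ℝ) else 0)
            = ∏ j ∈ s, g j (v j) := Finset.prod_congr rfl fun j hj => if_pos hj
        have h2 : ∏ j ∈ sᶜ, (if j ∈ s then g j (v j) else if v j = w j then (1:ℝ) else 0)
            = if (∀ j ∉ s, v j = w j) then 1 else 0 := by
          rw [Finset.prod_congr rfl (fun j hj => if_neg (Finset.mem_compl.mp hj)),
            Finset.prod_boole]
          simp [Finset.mem_compl]
        rw [h1, h2, mul_ite, mul_one, mul_zero]
    _ = ∏ j, ∑ x, (if j ∈ s then g j x else if x = w j then (1:ℝ) else 0) :=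
        (Fintype.prod_sum (fun j x => if j ∈ s then g j x else if x = w j then (1:ℝ) else 0)).symm
    _ = ∏ j ∈ s, ∑ x, g j x := by
        rw [← Finset.prod_mul_prod_compl s]
        have h1 : ∏ j ∈ s, (∑ x, if j ∈ s then g j x else if x = w j then (1:ℝ) else 0)
            = ∏ j ∈ s, ∑ x, g j x :=
          Finset.prod_congr rfl fun j hj => by simp [hj]
        have h2 : ∏ j ∈ sᶜ, (∑ x, if j ∈ s then g j x else if x = w j then (1:ℝ) else 0)
            = 1 := by
          refine Finset.prod_eq_one fun j hj => ?_
          simp [Finset.mem_compl.mp hj]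
        rw [h1, h2, mul_one]

section OneCoord
variable {𝒜 X B : Type*} [Fintype 𝒜] [Fintype X] [Fintype B]
  (p : 𝒜 → ℝ) (F : 𝒜 → X → B)

lemma collP_nonneg (hp : ∀ a, 0 ≤ p a) (u u' : X) : 0 ≤ collP p F u u' :=
  Finset.sum_nonneg fun a _ => by by_cases h : F a u = F a u' <;> simp [h, hp a]

lemma collP_self (hp1 : ∑ a : 𝒜, p a = 1) (u : X) : collP p F u u = 1 := by
  simp [collP, hp1]

/-- The "large collision" part of the collision probability (including the diagonal). -/
noncomputable def eAux (αj : ℝ) (u u' : X) : ℝ :=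
  if u' = u ∨ αj / (Fintype.card B : ℝ) < collP p F u u' then collP p F u u' else 0

lemma eAux_nonneg (hp : ∀ a, 0 ≤ p a) (αj : ℝ) (u u' : X) : 0 ≤ eAux p F αj u u' := by
  unfold eAux; split_ifs
  · exact collP_nonneg p F hp u u'
  · exact le_refl 0

lemma le_eAux (αj : ℝ) (hα : 0 ≤ αj) (u u' : X) :
    collP p F u u' ≤ αj / (Fintype.card B : ℝ) + eAux p F αj u u' := by
  unfold eAux; split_ifs with h
  · exact le_add_of_nonneg_left (div_nonneg hα (Nat.cast_nonneg _))
  · push_neg at h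
    rw [add_zero]
    exact h.2

lemma sum_eAux_le (hp1 : ∑ a : 𝒜, p a = 1) {αj βj : ℝ}
    (hhash : StrongHash p F αj βj) (u : X) :
    ∑ x : X, eAux p F αj u x ≤ βj + 1 := by
  have hsplit : ∑ x : X, eAux p F αj u x
      = eAux p F αj u u + ∑ x ∈ Finset.univ.erase u, eAux p F αj u x :=
    (Finset.add_sum_erase _ _ (mem_univ u)).symm
  have h1 : eAux p F αj u u = 1 := by
    rw [eAux, if_pos (Or.inl rfl), collP_self p F hp1]
  have h2 : ∑ x ∈ Finset.univ.erase u, eAux p F αj u x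
      = ∑ x ∈ (Finset.univ.erase u).filter
          (fun x => αj / (Fintype.card B : ℝ) < collP p F u x), collP p F u x := by
    rw [Finset.sum_filter]
    refine Finset.sum_congr rfl fun x hx => ?_
    have hxu : x ≠ u := (Finset.mem_erase.1 hx).1
    rw [eAux]
    exact if_congr (or_iff_right hxu) rfl rfl
  rw [hsplit, h1, h2]
  linarith [hhash u]

lemma coordE1 (hp1 : ∑ a : 𝒜, p a = 1) (u : X) :
    ∑ a : 𝒜, ∑ x : B, p a * (1 / (Fintype.card B : ℝ))
        * (if F a u = x then 1 else 0) = 1 / (Fintype.card B : ℝ) := by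
  have h : ∀ a : 𝒜, ∑ x : B, p a * (1 / (Fintype.card B : ℝ))
      * (if F a u = x then (1:ℝ) else 0) = p a * (1 / (Fintype.card B : ℝ)) := by
    intro a; simp [mul_ite]
  rw [Finset.sum_congr rfl fun a _ => h a, ← Finset.sum_mul, hp1, one_mul]

lemma coordE2 (u u' : X) :
    ∑ a : 𝒜, ∑ x : B, p a * (1 / (Fintype.card B : ℝ))
        * (if F a u = x ∧ F a u' = x then 1 else 0)
      = 1 / (Fintype.card B : ℝ) * collP p F u u' := by
  have h : ∀ a : 𝒜, ∑ x : B, p a * (1 / (Fintype.card B : ℝ))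
      * (if F a u = x ∧ F a u' = x then (1:ℝ) else 0)
      = (if F a u = F a u' then p a else 0) * (1 / (Fintype.card B : ℝ)) := by
    intro a
    by_cases hc : F a u = F a u'
    · rw [if_pos hc]
      have : ∀ x : B, (F a u = x ∧ F a u' = x) ↔ F a u = x := by
        intro x; constructor
        · exact fun h => h.1
        · exact fun h => ⟨h, hc ▸ h⟩
      simp only [mul_ite, mul_one, mul_zero]
      rw [Finset.sum_congr rfl fun x _ => if_congr (this x) rfl rfl]
      simp
    · rw [if_neg hc, zero_mul]
      refine Finset.sum_eq_zero fun x _ => ?_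
      have : ¬(F a u = x ∧ F a u' = x) := fun h => hc (h.1.trans h.2.symm)
      simp [this]
  rw [Finset.sum_congr rfl fun a _ => h a, ← Finset.sum_mul, collP, mul_comm]

end OneCoord

lemma pi_pair_sum {K : Type*} [Fintype K] {A B : K → Type*}
    [∀ j, Fintype (A j)] [∀ j, Fintype (B j)] (f : ∀ j, A j → B j → ℝ) :
    ∑ a : ∀ j, A j, ∑ b : ∀ j, B j, ∏ j, f j (a j) (b j) = ∏ j, ∑ x, ∑ y, f j x y := by
  calc ∑ a : ∀ j, A j, ∑ b : ∀ j, B j, ∏ j, f j (a j) (b j)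
      = ∑ a : ∀ j, A j, ∏ j, ∑ y, f j (a j) y :=
        Finset.sum_congr rfl fun a _ => (Fintype.prod_sum fun j y => f j (a j) y).symm
    _ = ∏ j, ∑ x, ∑ y, f j x y := (Fintype.prod_sum fun j x => ∑ y, f j x y).symm



lemma fiberMax_univ {K : Type*} [Fintype K] {X : K → Type*}
    (T : Finset (∀ j, X j)) (hT : T.Nonempty) : fiberMax T Finset.univ = T.card := by
  by_cases hK : (Finset.univ : Finset K) = ∅
  · rw [fiberMax, if_pos hK]
    have hempty : IsEmpty K := Finset.univ_eq_empty_iff.mp hK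
    have hsub : ∀ x y : (∀ j, X j), x = y := fun x y =>
      funext fun j => hempty.elim j
    refine (le_antisymm (Finset.card_le_one.mpr fun a _ b _ => hsub a b)
      (Finset.one_le_card.mpr hT)).symm
  · rw [fiberMax, if_neg hK, if_pos rfl]

set_option maxHeartbeats 800000 in
lemma stepB {K : Type*} [Fintype K] {X B 𝒜 : K → Type*}
    [∀ j, Fintype (X j)] [∀ j, Fintype (B j)] [∀ j, Fintype (𝒜 j)]
    (p : ∀ j, 𝒜 j → ℝ) (hp : ∀ j a, 0 ≤ p j a) (hp1 : ∀ j, ∑ a : 𝒜 j, p j a = 1)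
    (F : ∀ j, 𝒜 j → X j → B j) (α β : K → ℝ)
    (hhash : ∀ j, StrongHash (p j) (F j) (α j) (β j))
    (T : Finset (∀ j, X j)) (hT : T.Nonempty) (w : ∀ j, X j) (J : Finset K) :
    ∑ w' ∈ T, ∏ j ∈ Jᶜ, eAux (p j) (F j) (α j) (w j) (w' j)
      ≤ (fiberMax T J : ℝ) * ∏ j ∈ Jᶜ, (β j + 1) := by
  classical
  have hGnn : ∀ v : ∀ j, X j, 0 ≤ ∏ j ∈ Jᶜ, eAux (p j) (F j) (α j) (w j) (v j) :=
    fun v => Finset.prod_nonneg fun j _ => eAux_nonneg (p j) (F j) (hp j) (α j) _ _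
  by_cases hJu : J = Finset.univ
  · subst hJu
    rw [compl_univ]
    simp only [Finset.prod_empty, mul_one]
    rw [Finset.sum_const, nsmul_eq_mul, mul_one, fiberMax_univ T hT]
  · set G : (∀ j, X j) → ℝ := fun v => ∏ j ∈ Jᶜ, eAux (p j) (F j) (α j) (w j) (v j)
      with hG
    set π : (∀ j, X j) → (∀ j, X j) := fun v j => if j ∈ J then w j else v j with hπ
    have hπc : ∀ v (j : K), j ∈ Jᶜ → π v j = v j := fun v j hj => by
      rw [hπ]; exact if_neg (Finset.mem_compl.mp hj)
    have hfib : ∀ v ∈ T.image π, ((T.filter fun w' => π w' = v).card : ℝ)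
        ≤ (fiberMax T J : ℝ) := by
      intro v hv
      obtain ⟨w0, hw0T, hw0⟩ := Finset.mem_image.mp hv
      rw [Nat.cast_le]
      by_cases hJ0 : J = ∅
      · rw [fiberMax, if_pos hJ0]
        have hsub : (T.filter fun w' => π w' = v) ⊆ {v} := by
          intro w' hw'
          have hπw' : π w' = v := (Finset.mem_filter.mp hw').2
          have : w' = v := by
            rw [← hπw']
            refine funext fun j => ?_
            rw [hπ]
            exact (if_neg (by simp [hJ0])).symm
          simp [this]
        exact le_trans (Finset.card_le_card hsub) (by simp)
      · rw [fiberMax, if_neg hJ0, if_neg hJu]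
        have hle2 : (T.filter fun w' => ∀ j ∉ J, w' j = w0 j).card
            ≤ T.sup fun w => (T.filter fun w' => ∀ j ∉ J, w' j = w j).card :=
          Finset.le_sup (f := fun w => (T.filter fun w' => ∀ j ∉ J, w' j = w j).card) hw0T
        refine le_trans (Finset.card_le_card fun w' hw' => ?_) hle2
        obtain ⟨hw'T, hπw'⟩ := Finset.mem_filter.mp hw'
        refine Finset.mem_filter.mpr ⟨hw'T, fun j hj => ?_⟩
        have h1 : π w' j = π w0 j := by rw [hπw', hw0]
        rw [hπ] at h1
        simpa [if_neg hj] using h1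
    calc ∑ w' ∈ T, ∏ j ∈ Jᶜ, eAux (p j) (F j) (α j) (w j) (w' j)
        = ∑ w' ∈ T, G (π w') := by
          refine Finset.sum_congr rfl fun w' _ => ?_
          rw [hG]
          exact Finset.prod_congr rfl fun j hj => by rw [hπc w' j hj]
      _ = ∑ v ∈ T.image π, ((T.filter fun w' => π w' = v).card) • G v :=
          Finset.sum_comp G π
      _ ≤ ∑ v ∈ T.image π, (fiberMax T J : ℝ) * G v := by
          refine Finset.sum_le_sum fun v hv => ?_
          rw [nsmul_eq_mul]
          exact mul_le_mul_of_nonneg_right (hfib v hv) (hGnn v)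
      _ = (fiberMax T J : ℝ) * ∑ v ∈ T.image π, G v := (Finset.mul_sum _ _ _).symm
      _ ≤ (fiberMax T J : ℝ)
          * ∑ v ∈ Finset.univ.filter (fun v : ∀ j, X j => ∀ j ∉ Jᶜ, v j = w j), G v := by
          refine mul_le_mul_of_nonneg_left
            (Finset.sum_le_sum_of_subset_of_nonneg ?_ fun v _ _ => hGnn v)
            (Nat.cast_nonneg _)
          intro v hv
          obtain ⟨w0, _, hw0⟩ := Finset.mem_image.mp hv
          refine Finset.mem_filter.mpr ⟨Finset.mem_univ v, fun j hj => ?_⟩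
          have hjJ : j ∈ J := by simpa using hj
          rw [← hw0, hπ]
          exact if_pos hjJ
      _ = (fiberMax T J : ℝ) * ∏ j ∈ Jᶜ, ∑ x, eAux (p j) (F j) (α j) (w j) x := by
          rw [cylinder_sum Jᶜ w (fun j x => eAux (p j) (F j) (α j) (w j) x)]
      _ ≤ (fiberMax T J : ℝ) * ∏ j ∈ Jᶜ, (β j + 1) := by
          refine mul_le_mul_of_nonneg_left
            (Finset.prod_le_prod (fun j _ => Finset.sum_nonneg fun x _ =>
              eAux_nonneg (p j) (F j) (hp j) (α j) _ _)
              (fun j _ => sum_eAux_le (p j) (F j) (hp1 j) (hhash j) (w j)))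
            (Nat.cast_nonneg _)

lemma hcore_lemma {K : Type*} [Fintype K] {X B 𝒜 : K → Type*}
    [∀ j, Fintype (X j)] [∀ j, Fintype (B j)] [∀ j, Nonempty (B j)] [∀ j, Fintype (𝒜 j)]
    (p : ∀ j, 𝒜 j → ℝ) (hp : ∀ j a, 0 ≤ p j a) (hp1 : ∀ j, ∑ a : 𝒜 j, p j a = 1)
    (F : ∀ j, 𝒜 j → X j → B j) (α β : K → ℝ) (hα : ∀ j, 0 ≤ α j)
    (hhash : ∀ j, StrongHash (p j) (F j) (α j) (β j))
    (T : Finset (∀ j, X j)) (hT : T.Nonempty) :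
    ∑ w ∈ T, ∑ w' ∈ T, ∏ j, collP (p j) (F j) (w j) (w' j)
      ≤ ∑ J : Finset K, (T.card : ℝ) * (fiberMax T J : ℝ)
          * (∏ j ∈ J, α j / (Fintype.card (B j) : ℝ)) * ∏ j ∈ Jᶜ, (β j + 1) := by
  classical
  have hαB : ∀ (J : Finset K), 0 ≤ ∏ j ∈ J, α j / (Fintype.card (B j) : ℝ) :=
    fun J => Finset.prod_nonneg fun j _ => div_nonneg (hα j) (Nat.cast_nonneg _)
  have hperw : ∀ w ∈ T, ∑ w' ∈ T, ∏ j, collP (p j) (F j) (w j) (w' j)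
      ≤ ∑ J : Finset K, (fiberMax T J : ℝ)
          * (∏ j ∈ J, α j / (Fintype.card (B j) : ℝ)) * ∏ j ∈ Jᶜ, (β j + 1) := by
    intro w _
    calc ∑ w' ∈ T, ∏ j, collP (p j) (F j) (w j) (w' j)
        ≤ ∑ w' ∈ T, ∏ j, (α j / (Fintype.card (B j) : ℝ)
            + eAux (p j) (F j) (α j) (w j) (w' j)) := by
          refine Finset.sum_le_sum fun w' _ => Finset.prod_le_prod
            (fun j _ => collP_nonneg (p j) (F j) (hp j) _ _)
            (fun j _ => le_eAux (p j) (F j) (α j) (hα j) _ _)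
      _ = ∑ w' ∈ T, ∑ J : Finset K, (∏ j ∈ J, α j / (Fintype.card (B j) : ℝ))
            * ∏ j ∈ Jᶜ, eAux (p j) (F j) (α j) (w j) (w' j) :=
          Finset.sum_congr rfl fun w' _ => Fintype.prod_add _ _
      _ = ∑ J : Finset K, (∏ j ∈ J, α j / (Fintype.card (B j) : ℝ))
            * ∑ w' ∈ T, ∏ j ∈ Jᶜ, eAux (p j) (F j) (α j) (w j) (w' j) := by
          rw [Finset.sum_comm]
          exact Finset.sum_congr rfl fun J _ => (Finset.mul_sum _ _ _).symm
      _ ≤ ∑ J : Finset K, (∏ j ∈ J, α j / (Fintype.card (B j) : ℝ))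
            * ((fiberMax T J : ℝ) * ∏ j ∈ Jᶜ, (β j + 1)) := by
          refine Finset.sum_le_sum fun J _ => mul_le_mul_of_nonneg_left
            (stepB p hp hp1 F α β hhash T hT w J) (hαB J)
      _ = ∑ J : Finset K, (fiberMax T J : ℝ)
            * (∏ j ∈ J, α j / (Fintype.card (B j) : ℝ)) * ∏ j ∈ Jᶜ, (β j + 1) :=
          Finset.sum_congr rfl fun J _ => by ring
  calc ∑ w ∈ T, ∑ w' ∈ T, ∏ j, collP (p j) (F j) (w j) (w' j)
      ≤ ∑ w ∈ T, ∑ J : Finset K, (fiberMax T J : ℝ)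
          * (∏ j ∈ J, α j / (Fintype.card (B j) : ℝ)) * ∏ j ∈ Jᶜ, (β j + 1) :=
        Finset.sum_le_sum hperw
    _ = ∑ J : Finset K, (T.card : ℝ) * (fiberMax T J : ℝ)
          * (∏ j ∈ J, α j / (Fintype.card (B j) : ℝ)) * ∏ j ∈ Jᶜ, (β j + 1) := by
        rw [Finset.sum_const, nsmul_eq_mul, Finset.mul_sum]
        exact Finset.sum_congr rfl fun J _ => by ring

section Main
variable {K : Type*} [Fintype K] {X B 𝒜 : K → Type*}
    [∀ j, Fintype (X j)] [∀ j, Fintype (B j)] [∀ j, Nonempty (B j)] [∀ j, Fintype (𝒜 j)]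
    (p : ∀ j, 𝒜 j → ℝ)
    (F : ∀ j, 𝒜 j → X j → B j)

lemma hS_lemma (hp1 : ∀ j, ∑ a : 𝒜 j, p j a = 1) :
    ∑ a : ∀ j, 𝒜 j, ∑ b : ∀ j, B j,
      (∏ j, p j (a j)) * ∏ j, (1 / (Fintype.card (B j) : ℝ)) = 1 := by
  have h1 : ∑ a : ∀ j, 𝒜 j, ∏ j, p j (a j) = 1 := by
    rw [← Fintype.prod_sum fun j a => p j a]
    simp [hp1]
  have h2 : ((Fintype.card (∀ j, B j) : ℝ)) * ∏ j, (1 / (Fintype.card (B j) : ℝ)) = 1 := by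
    rw [Fintype.card_pi]
    push_cast
    rw [← Finset.prod_mul_distrib]
    refine Finset.prod_eq_one fun j _ => ?_
    have : (Fintype.card (B j) : ℝ) ≠ 0 := Nat.cast_ne_zero.mpr Fintype.card_pos.ne'
    field_simp
  simp only [Finset.sum_const, card_univ, nsmul_eq_mul]
  calc ∑ a : ∀ j, 𝒜 j, (Fintype.card (∀ j, B j) : ℝ)
          * ((∏ j, p j (a j)) * ∏ j, (1 / (Fintype.card (B j) : ℝ)))
      = (∑ a : ∀ j, 𝒜 j, ∏ j, p j (a j))
          * ((Fintype.card (∀ j, B j) : ℝ) * ∏ j, (1 / (Fintype.card (B j) : ℝ))) := by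
        rw [Finset.sum_mul]
        exact Finset.sum_congr rfl fun a _ => by ring
    _ = 1 := by rw [h1, h2, one_mul]

lemma hE1_lemma (hp1 : ∀ j, ∑ a : 𝒜 j, p j a = 1) (T : Finset (∀ j, X j)) :
    ∑ a : ∀ j, 𝒜 j, ∑ b : ∀ j, B j,
      ((∏ j, p j (a j)) * ∏ j, (1 / (Fintype.card (B j) : ℝ)))
        * ((T.filter fun w => ∀ j, F j (a j) (w j) = b j).card : ℝ)
    = (T.card : ℝ) * ∏ j, (1 / (Fintype.card (B j) : ℝ)) := by
  have key : ∀ (a : ∀ j, 𝒜 j) (b : ∀ j, B j),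
      ((∏ j, p j (a j)) * ∏ j, (1 / (Fintype.card (B j) : ℝ)))
        * ((T.filter fun w => ∀ j, F j (a j) (w j) = b j).card : ℝ)
      = ∑ w ∈ T, ∏ j, (p j (a j) * (1 / (Fintype.card (B j) : ℝ))
          * (if F j (a j) (w j) = b j then 1 else 0)) := by
    intro a b
    rw [← Finset.sum_boole, Finset.mul_sum]
    refine Finset.sum_congr rfl fun w _ => ?_
    rw [Finset.prod_mul_distrib, Finset.prod_mul_distrib, Fintype.prod_boole]
  calc ∑ a : ∀ j, 𝒜 j, ∑ b : ∀ j, B j,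
        ((∏ j, p j (a j)) * ∏ j, (1 / (Fintype.card (B j) : ℝ)))
          * ((T.filter fun w => ∀ j, F j (a j) (w j) = b j).card : ℝ)
      = ∑ a : ∀ j, 𝒜 j, ∑ b : ∀ j, B j, ∑ w ∈ T,
          ∏ j, (p j (a j) * (1 / (Fintype.card (B j) : ℝ))
            * (if F j (a j) (w j) = b j then 1 else 0)) := by
        exact Finset.sum_congr rfl fun a _ => Finset.sum_congr rfl fun b _ => key a b
    _ = ∑ w ∈ T, ∑ a : ∀ j, 𝒜 j, ∑ b : ∀ j, B j,
          ∏ j, (p j (a j) * (1 / (Fintype.card (B j) : ℝ))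
            * (if F j (a j) (w j) = b j then 1 else 0)) := by
        rw [show (∑ a : ∀ j, 𝒜 j, ∑ b : ∀ j, B j, ∑ w ∈ T,
          ∏ j, (p j (a j) * (1 / (Fintype.card (B j) : ℝ))
            * (if F j (a j) (w j) = b j then 1 else 0)))
          = ∑ a : ∀ j, 𝒜 j, ∑ w ∈ T, ∑ b : ∀ j, B j,
          ∏ j, (p j (a j) * (1 / (Fintype.card (B j) : ℝ))
            * (if F j (a j) (w j) = b j then 1 else 0))
          from Finset.sum_congr rfl fun a _ => Finset.sum_comm]
        exact Finset.sum_comm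
    _ = ∑ w ∈ T, ∏ j, (1 / (Fintype.card (B j) : ℝ)) := by
        refine Finset.sum_congr rfl fun w _ => ?_
        rw [pi_pair_sum (fun j a' x => p j a' * (1 / (Fintype.card (B j) : ℝ))
          * (if F j a' (w j) = x then 1 else 0))]
        exact Finset.prod_congr rfl fun j _ => coordE1 (p j) (F j) (hp1 j) (w j)
    _ = (T.card : ℝ) * ∏ j, (1 / (Fintype.card (B j) : ℝ)) := by
        rw [Finset.sum_const, nsmul_eq_mul]

lemma hE2_lemma (T : Finset (∀ j, X j)) :
    ∑ a : ∀ j, 𝒜 j, ∑ b : ∀ j, B j,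
      ((∏ j, p j (a j)) * ∏ j, (1 / (Fintype.card (B j) : ℝ)))
        * ((T.filter fun w => ∀ j, F j (a j) (w j) = b j).card : ℝ) ^ 2
    = (∏ j, (1 / (Fintype.card (B j) : ℝ)))
        * ∑ w ∈ T, ∑ w' ∈ T, ∏ j, collP (p j) (F j) (w j) (w' j) := by
  have key : ∀ (a : ∀ j, 𝒜 j) (b : ∀ j, B j),
      ((∏ j, p j (a j)) * ∏ j, (1 / (Fintype.card (B j) : ℝ)))
        * ((T.filter fun w => ∀ j, F j (a j) (w j) = b j).card : ℝ) ^ 2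
      = ∑ w ∈ T, ∑ w' ∈ T, ∏ j, (p j (a j) * (1 / (Fintype.card (B j) : ℝ))
          * (if F j (a j) (w j) = b j ∧ F j (a j) (w' j) = b j then 1 else 0)) := by
    intro a b
    rw [← Finset.sum_boole, sq, Finset.sum_mul_sum, Finset.mul_sum]
    refine Finset.sum_congr rfl fun w _ => ?_
    rw [Finset.mul_sum]
    refine Finset.sum_congr rfl fun w' _ => ?_
    rw [Finset.prod_mul_distrib, Finset.prod_mul_distrib, Fintype.prod_boole]
    have hite : (if (∀ j, F j (a j) (w j) = b j) then (1:ℝ) else 0)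
        * (if (∀ j, F j (a j) (w' j) = b j) then (1:ℝ) else 0)
        = if (∀ i, F i (a i) (w i) = b i ∧ F i (a i) (w' i) = b i) then (1:ℝ) else 0 := by
      by_cases h1 : ∀ j, F j (a j) (w j) = b j <;>
        by_cases h2 : ∀ j, F j (a j) (w' j) = b j <;>
        simp [h1, h2, forall_and]
    rw [hite]
  calc ∑ a : ∀ j, 𝒜 j, ∑ b : ∀ j, B j,
        ((∏ j, p j (a j)) * ∏ j, (1 / (Fintype.card (B j) : ℝ)))
          * ((T.filter fun w => ∀ j, F j (a j) (w j) = b j).card : ℝ) ^ 2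
      = ∑ a : ∀ j, 𝒜 j, ∑ b : ∀ j, B j, ∑ w ∈ T, ∑ w' ∈ T,
          ∏ j, (p j (a j) * (1 / (Fintype.card (B j) : ℝ))
            * (if F j (a j) (w j) = b j ∧ F j (a j) (w' j) = b j then 1 else 0)) :=
        Finset.sum_congr rfl fun a _ => Finset.sum_congr rfl fun b _ => key a b
    _ = ∑ w ∈ T, ∑ w' ∈ T, ∑ a : ∀ j, 𝒜 j, ∑ b : ∀ j, B j,
          ∏ j, (p j (a j) * (1 / (Fintype.card (B j) : ℝ))
            * (if F j (a j) (w j) = b j ∧ F j (a j) (w' j) = b j then 1 else 0)) := by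
        have step1 : ∀ a : ∀ j, 𝒜 j, (∑ b : ∀ j, B j, ∑ w ∈ T, ∑ w' ∈ T,
            ∏ j, (p j (a j) * (1 / (Fintype.card (B j) : ℝ))
              * (if F j (a j) (w j) = b j ∧ F j (a j) (w' j) = b j then 1 else 0)))
            = ∑ w ∈ T, ∑ w' ∈ T, ∑ b : ∀ j, B j,
            ∏ j, (p j (a j) * (1 / (Fintype.card (B j) : ℝ))
              * (if F j (a j) (w j) = b j ∧ F j (a j) (w' j) = b j then 1 else 0)) := by
          intro a
          rw [Finset.sum_comm]
          exact Finset.sum_congr rfl fun w _ => Finset.sum_comm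
        rw [Finset.sum_congr rfl fun a _ => step1 a]
        rw [Finset.sum_comm]
        exact Finset.sum_congr rfl fun w _ => Finset.sum_comm
    _ = ∑ w ∈ T, ∑ w' ∈ T, ∏ j, ((1 / (Fintype.card (B j) : ℝ))
          * collP (p j) (F j) (w j) (w' j)) := by
        refine Finset.sum_congr rfl fun w _ => Finset.sum_congr rfl fun w' _ => ?_
        rw [pi_pair_sum (fun j a' x => p j a' * (1 / (Fintype.card (B j) : ℝ))
          * (if F j a' (w j) = x ∧ F j a' (w' j) = x then 1 else 0))]
        exact Finset.prod_congr rfl fun j _ => coordE2 (p j) (F j) (w j) (w' j)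
    _ = (∏ j, (1 / (Fintype.card (B j) : ℝ)))
          * ∑ w ∈ T, ∑ w' ∈ T, ∏ j, collP (p j) (F j) (w j) (w' j) := by
        rw [Finset.mul_sum]
        refine Finset.sum_congr rfl fun w _ => ?_
        rw [Finset.mul_sum]
        refine Finset.sum_congr rfl fun w' _ => ?_
        rw [Finset.prod_mul_distrib]

end Main

set_option maxHeartbeats 1000000 in
/-- Multi-terminal saturation property. -/
theorem stmt9 {K : Type*} [Fintype K] {X B 𝒜 : K → Type*}
    [∀ j, Fintype (X j)] [∀ j, Fintype (B j)] [∀ j, Nonempty (B j)] [∀ j, Fintype (𝒜 j)]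
    (p : ∀ j, 𝒜 j → ℝ) (hp : ∀ j a, 0 ≤ p j a) (hp1 : ∀ j, ∑ a : 𝒜 j, p j a = 1)
    (F : ∀ j, 𝒜 j → X j → B j)
    (α β : K → ℝ) (hα : ∀ j, 0 ≤ α j) (hβ : ∀ j, 0 ≤ β j)
    (hhash : ∀ j, StrongHash (p j) (F j) (α j) (β j))
    (T : Finset (∀ j, X j)) (hT : T.Nonempty) :
    ∑ a : ∀ j, 𝒜 j, ∑ b : ∀ j, B j,
        (if ∀ w ∈ T, ∃ j, F j (a j) (w j) ≠ b j
          then (∏ j, p j (a j)) * ∏ j, (1 / (Fintype.card (B j) : ℝ))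
          else 0) ≤
      (∏ j, α j) - 1
        + ∑ J ∈ Finset.univ.powerset.filter (fun J : Finset K => J ≠ Finset.univ),
            (∏ j ∈ Jᶜ, (Fintype.card (B j) : ℝ)) * (fiberMax T J : ℝ)
              * (∏ j ∈ J, α j) * (∏ j ∈ Jᶜ, (β j + 1)) / (T.card : ℝ) := by
  classical
  set P : ℝ := ∏ j, (1 / (Fintype.card (B j) : ℝ)) with hPdef
  have hBpos : ∀ j, (0:ℝ) < (Fintype.card (B j) : ℝ) :=
    fun j => Nat.cast_pos.mpr Fintype.card_pos
  have hPpos : 0 < P := Finset.prod_pos fun j _ => by positivity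
  have hTpos : (0:ℝ) < (T.card : ℝ) := Nat.cast_pos.mpr hT.card_pos
  set f : Finset K → ℝ := fun J =>
    (∏ j ∈ Jᶜ, (Fintype.card (B j) : ℝ)) * (fiberMax T J : ℝ)
      * (∏ j ∈ J, α j) * (∏ j ∈ Jᶜ, (β j + 1)) / (T.card : ℝ) with hfdef
  set R : ℝ := ∑ J : Finset K, f J with hRdef
  set D : ℝ := ∑ w ∈ T, ∑ w' ∈ T, ∏ j, collP (p j) (F j) (w j) (w' j) with hDdef
  -- the per-J algebraic identity
  have hPsplit : ∀ J : Finset K,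
      P = 1 / ((∏ j ∈ J, (Fintype.card (B j) : ℝ)) * ∏ j ∈ Jᶜ, (Fintype.card (B j) : ℝ)) := by
    intro J
    calc P = (∏ j, (1:ℝ)) / ∏ j, (Fintype.card (B j) : ℝ) := by
          rw [hPdef, Finset.prod_div_distrib]
      _ = 1 / ((∏ j ∈ J, (Fintype.card (B j) : ℝ)) * ∏ j ∈ Jᶜ, (Fintype.card (B j) : ℝ)) := by
          rw [Finset.prod_const_one, Finset.prod_mul_prod_compl]
  have hterm : ∀ J : Finset K,
      P * ((T.card : ℝ) * (fiberMax T J : ℝ)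
          * (∏ j ∈ J, α j / (Fintype.card (B j) : ℝ)) * ∏ j ∈ Jᶜ, (β j + 1))
        = f J * ((T.card : ℝ) * P)^2 := by
    intro J
    have hx : (0:ℝ) < ∏ j ∈ J, (Fintype.card (B j) : ℝ) :=
      Finset.prod_pos fun j _ => hBpos j
    have hy : (0:ℝ) < ∏ j ∈ Jᶜ, (Fintype.card (B j) : ℝ) :=
      Finset.prod_pos fun j _ => hBpos j
    rw [hfdef, hPsplit J, Finset.prod_div_distrib]
    field_simp
  -- splitting off the J = univ term
  have hRsplit : (∏ j, α j) - 1
      + ∑ J ∈ Finset.univ.powerset.filter (fun J : Finset K => J ≠ Finset.univ), f J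
      = R - 1 := by
    have hfu : f Finset.univ = ∏ j, α j := by
      rw [hfdef]
      simp only [compl_univ, Finset.prod_empty, one_mul, mul_one]
      rw [fiberMax_univ T hT]
      field_simp
    rw [Finset.powerset_univ, Finset.filter_ne', hRdef,
      ← Finset.add_sum_erase Finset.univ f (Finset.mem_univ Finset.univ), hfu]
    ring
  -- N = 0 on the failure event
  have hfail : ∀ (a : ∀ j, 𝒜 j) (b : ∀ j, B j),
      (∀ w ∈ T, ∃ j, F j (a j) (w j) ≠ b j) →
      (T.filter fun w => ∀ j, F j (a j) (w j) = b j) = ∅ := by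
    intro a b h
    refine Finset.filter_eq_empty_iff.mpr fun w hw hall => ?_
    obtain ⟨j, hj⟩ := h w hw
    exact hj (hall j)
  -- pointwise Chebyshev bound
  have hpt : ∀ (a : ∀ j, 𝒜 j) (b : ∀ j, B j),
      (if ∀ w ∈ T, ∃ j, F j (a j) (w j) ≠ b j
        then (∏ j, p j (a j)) * P else 0) * ((T.card : ℝ) * P)^2
      ≤ ((∏ j, p j (a j)) * P)
        * (((T.filter fun w => ∀ j, F j (a j) (w j) = b j).card : ℝ) - (T.card : ℝ) * P)^2 := by
    intro a b
    by_cases hc : ∀ w ∈ T, ∃ j, F j (a j) (w j) ≠ b j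
    · rw [if_pos hc, hfail a b hc]
      simp only [Finset.card_empty, Nat.cast_zero]
      refine le_of_eq ?_
      ring
    · rw [if_neg hc, zero_mul]
      have h1 : 0 ≤ (∏ j, p j (a j)) * P :=
        mul_nonneg (Finset.prod_nonneg fun j _ => hp j (a j)) hPpos.le
      positivity
  -- sum of the Chebyshev bound
  have hcheb : (∑ a : ∀ j, 𝒜 j, ∑ b : ∀ j, B j,
      (if ∀ w ∈ T, ∃ j, F j (a j) (w j) ≠ b j
        then (∏ j, p j (a j)) * P else 0)) * ((T.card : ℝ) * P)^2
      ≤ P * D - ((T.card : ℝ) * P)^2 := by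
    have hE1 := hE1_lemma p F hp1 T
    have hE2 := hE2_lemma p F T
    have hS := hS_lemma (B := B) p hp1
    simp only [← hPdef] at hE1 hE2 hS
    calc (∑ a : ∀ j, 𝒜 j, ∑ b : ∀ j, B j,
        (if ∀ w ∈ T, ∃ j, F j (a j) (w j) ≠ b j
          then (∏ j, p j (a j)) * P else 0)) * ((T.card : ℝ) * P)^2
        = ∑ a : ∀ j, 𝒜 j, ∑ b : ∀ j, B j,
            (if ∀ w ∈ T, ∃ j, F j (a j) (w j) ≠ b j
              then (∏ j, p j (a j)) * P else 0) * ((T.card : ℝ) * P)^2 := by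
          rw [Finset.sum_mul]
          exact Finset.sum_congr rfl fun a _ => Finset.sum_mul _ _ _
      _ ≤ ∑ a : ∀ j, 𝒜 j, ∑ b : ∀ j, B j, ((∏ j, p j (a j)) * P)
            * (((T.filter fun w => ∀ j, F j (a j) (w j) = b j).card : ℝ)
                - (T.card : ℝ) * P)^2 :=
          Finset.sum_le_sum fun a _ => Finset.sum_le_sum fun b _ => hpt a b
      _ = ∑ a : ∀ j, 𝒜 j, ∑ b : ∀ j, B j,
            (((∏ j, p j (a j)) * P)
                * ((T.filter fun w => ∀ j, F j (a j) (w j) = b j).card : ℝ)^2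
              - (2 * ((T.card : ℝ) * P))
                * (((∏ j, p j (a j)) * P)
                  * ((T.filter fun w => ∀ j, F j (a j) (w j) = b j).card : ℝ))
              + ((T.card : ℝ) * P)^2 * ((∏ j, p j (a j)) * P)) :=
          Finset.sum_congr rfl fun a _ => Finset.sum_congr rfl fun b _ => by ring
      _ = P * D - ((T.card : ℝ) * P)^2 := by
          have e2 : ∑ a : ∀ j, 𝒜 j, ∑ b : ∀ j, B j,
              (2 * ((T.card : ℝ) * P)) * (((∏ j, p j (a j)) * P)
                * ((T.filter fun w => ∀ j, F j (a j) (w j) = b j).card : ℝ))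
              = (2 * ((T.card : ℝ) * P)) * ∑ a : ∀ j, 𝒜 j, ∑ b : ∀ j, B j,
                ((∏ j, p j (a j)) * P)
                  * ((T.filter fun w => ∀ j, F j (a j) (w j) = b j).card : ℝ) := by
            conv_rhs => rw [Finset.mul_sum]
            exact Finset.sum_congr rfl fun a _ => (Finset.mul_sum _ _ _).symm
          have e3 : ∑ a : ∀ j, 𝒜 j, ∑ b : ∀ j, B j,
              ((T.card : ℝ) * P)^2 * ((∏ j, p j (a j)) * P)
              = ((T.card : ℝ) * P)^2 * ∑ a : ∀ j, 𝒜 j, ∑ b : ∀ j, B j,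
                ((∏ j, p j (a j)) * P) := by
            conv_rhs => rw [Finset.mul_sum]
            exact Finset.sum_congr rfl fun a _ => (Finset.mul_sum _ _ _).symm
          rw [← hDdef] at hE2
          simp only [Finset.sum_add_distrib, Finset.sum_sub_distrib]
          rw [e2, e3, hE1, hE2, hS]
          ring
  -- putting it together
  have hPD : P * D ≤ R * ((T.card : ℝ) * P)^2 := by
    have hcore := hcore_lemma p hp hp1 F α β hα hhash T hT
    calc P * D ≤ P * ∑ J : Finset K, (T.card : ℝ) * (fiberMax T J : ℝ)
          * (∏ j ∈ J, α j / (Fintype.card (B j) : ℝ)) * ∏ j ∈ Jᶜ, (β j + 1) := by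
          rw [hDdef]
          exact mul_le_mul_of_nonneg_left hcore hPpos.le
      _ = ∑ J : Finset K, f J * ((T.card : ℝ) * P)^2 := by
          rw [Finset.mul_sum]
          exact Finset.sum_congr rfl fun J _ => hterm J
      _ = R * ((T.card : ℝ) * P)^2 := by rw [hRdef, Finset.sum_mul]
  have hmain : (∑ a : ∀ j, 𝒜 j, ∑ b : ∀ j, B j,
      (if ∀ w ∈ T, ∃ j, F j (a j) (w j) ≠ b j
        then (∏ j, p j (a j)) * P else 0)) * ((T.card : ℝ) * P)^2
      ≤ (R - 1) * ((T.card : ℝ) * P)^2 := by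
    calc _ ≤ P * D - ((T.card : ℝ) * P)^2 := hcheb
      _ ≤ R * ((T.card : ℝ) * P)^2 - ((T.card : ℝ) * P)^2 := sub_le_sub_right hPD _
      _ = (R - 1) * ((T.card : ℝ) * P)^2 := by ring
  have hfin := le_of_mul_le_mul_right hmain (by positivity)
  calc ∑ a : ∀ j, 𝒜 j, ∑ b : ∀ j, B j,
      (if ∀ w ∈ T, ∃ j, F j (a j) (w j) ≠ b j
        then (∏ j, p j (a j)) * P else 0)
      ≤ R - 1 := hfin
    _ = (∏ j, α j) - 1
        + ∑ J ∈ Finset.univ.powerset.filter (fun J : Finset K => J ≠ Finset.univ), f J :=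
      hRsplit.symm
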